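/- arXiv:1602.02860 — 8 statements merged into one kernel-verified Lean document; each statement's English description precedes it below -/
import Mathlib

section
/- For the linearized closed-loop system whose characteristic polynomial under the scaling attack is P(z) = (h+1)(z−1) + 2η(1 + ργμh + h − ρh), with h > 0, ρ ∈ (0,1], γμ > 0, η ∈ (0,1): the unique root of P(z) lies strictly inside the unit disk if and only if 0 < η < (h+1)/(h + 1 + ρh(γμ − 1)). -/
/-- Scaling-attack characteristic polynomial P(z)=(h+1)(z-1)+2η(1+ργμh+h-ρh):
it has a unique root, and the root lies strictly inside the unit disk iff
0 < η < (h+1)/(h+1+ρh(γμ-1)). -/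
theorem stmt4 (h ρ gm η : ℝ) (hh : 0 < h) (hρ1 : 0 < ρ) (hρ2 : ρ ≤ 1)
    (hgm : 0 < gm) (hη1 : 0 < η) (hη2 : η < 1) :
    (∃! z : ℂ, ((h + 1 : ℝ) : ℂ) * (z - 1) +
      ((2 * η * (1 + ρ * gm * h + h - ρ * h) : ℝ) : ℂ) = 0) ∧
    (∀ z : ℂ, ((h + 1 : ℝ) : ℂ) * (z - 1) +
      ((2 * η * (1 + ρ * gm * h + h - ρ * h) : ℝ) : ℂ) = 0 →
      (‖z‖ < 1 ↔ 0 < η ∧ η < (h + 1) / (h + 1 + ρ * h * (gm - 1)))) := by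
  have ha : (0:ℝ) < h + 1 := by linarith
  have ha' : ((h + 1 : ℝ) : ℂ) ≠ 0 := by exact_mod_cast ne_of_gt ha
  have hD : (0:ℝ) < 1 + ρ * gm * h + h - ρ * h := by
    nlinarith [mul_pos (mul_pos hρ1 hgm) hh, mul_nonneg (sub_nonneg.2 hρ2) hh.le]
  set c : ℝ := 2 * η * (1 + ρ * gm * h + h - ρ * h) with hc
  have hcpos : 0 < c := by positivity
  set z0 : ℝ := 1 - c / (h + 1) with hz0
  have ha'' : (h : ℂ) + 1 ≠ 0 := by exact_mod_cast ne_of_gt ha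
  have hroot : ∀ z : ℂ, ((h + 1 : ℝ) : ℂ) * (z - 1) + ((c : ℝ) : ℂ) = 0 ↔ z = (z0 : ℝ) := by
    intro z
    rw [hz0]
    push_cast
    constructor
    · intro hz
      field_simp
      linear_combination hz
    · intro hz
      subst hz
      field_simp
      ring
  constructor
  · exact ⟨(z0 : ℝ), (hroot _).2 rfl, fun y hy => (hroot y).1 hy⟩
  · intro z hz
    rw [(hroot z).1 hz, Complex.norm_real, Real.norm_eq_abs]
    rw [abs_lt]
    constructor
    · rintro ⟨h1, h2⟩
      refine ⟨hη1, ?_⟩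
      have hD' : (0:ℝ) < h + 1 + ρ * h * (gm - 1) := by nlinarith
      rw [lt_div_iff₀ hD']
      have h1' : c / (h + 1) < 2 := by rw [hz0] at h1; linarith
      have hc2 : c < 2 * (h + 1) := by
        have := (div_lt_iff₀ ha).1 h1'
        linarith
      rw [hc] at hc2
      nlinarith
    · rintro ⟨h1, h2⟩
      have hD' : (0:ℝ) < h + 1 + ρ * h * (gm - 1) := by nlinarith
      rw [lt_div_iff₀ hD'] at h2
      have hc2 : c < 2 * (h + 1) := by rw [hc]; nlinarith
      constructor
      · rw [hz0]
        have : c / (h + 1) < 2 := (div_lt_iff₀ ha).2 (by linarith)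
        linarith
      · rw [hz0]
        have : 0 < c / (h + 1) := div_pos hcpos ha
        linarith
end

section
/- Under the CEO demand model, if the scaling factor satisfies γ ≥ 1 (price amplification), then for every h > 0 and every η ∈ (0,1), the root of the scaling-attack characteristic polynomial P(z) = (h+1)(z−1) + 2η(1 + ρhγ^ε + h − ρh) lies strictly inside the unit disk; i.e., the system is stable regardless of h. -/
/-- Scaling attack under CEO demand with amplification γ ≥ 1: for every h > 0
and η ∈ (0,1) the root of P(z)=(h+1)(z-1)+2η(1+ρhγ^ε+h-ρh) lies strictly
inside the unit disk. -/
theorem stmt7 (ρ ε γ : ℝ) (hρ1 : 0 < ρ) (hρ2 : ρ ≤ 1)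
    (hε1 : -1 < ε) (hε2 : ε < 0) (hγ : 1 ≤ γ) :
    ∀ h : ℝ, 0 < h → ∀ η : ℝ, 0 < η → η < 1 →
      ∀ z : ℂ, ((h + 1 : ℝ) : ℂ) * (z - 1) +
        ((2 * η * (1 + ρ * h * γ ^ ε + h - ρ * h) : ℝ) : ℂ) = 0 →
        ‖z‖ < 1 := by
  intro h hh η hη1 hη2 z hz
  have hγ0 : (0:ℝ) < γ := lt_of_lt_of_le one_pos hγ
  have hp0 : (0:ℝ) < γ ^ ε := Real.rpow_pos_of_pos hγ0 ε
  have hp1 : γ ^ ε ≤ 1 := Real.rpow_le_one_of_one_le_of_nonpos hγ (le_of_lt hε2)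
  set A : ℝ := 1 + ρ * h * γ ^ ε + h - ρ * h with hA
  have hApos : 0 < A := by
    have : 0 < ρ * h * γ ^ ε := by positivity
    nlinarith
  have hAle : A ≤ 1 + h := by nlinarith [mul_le_of_le_one_right (le_of_lt (mul_pos hρ1 hh)) hp1]
  have hh1 : (0:ℝ) < h + 1 := by linarith
  have hh1c : ((h + 1 : ℝ) : ℂ) ≠ 0 := by exact_mod_cast ne_of_gt hh1
  have hzval : z = ((1 - 2 * η * A / (h + 1) : ℝ) : ℂ) := by
    apply mul_left_cancel₀ hh1c
    push_cast
    rw [mul_sub, mul_div_cancel₀ _ (by exact_mod_cast ne_of_gt hh1 : ((h:ℂ)+1) ≠ 0)]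
    push_cast at hz
    linear_combination hz
  rw [hzval, Complex.norm_real, Real.norm_eq_abs, abs_lt]
  constructor
  · have : 2 * η * A < 2 * (h + 1) := by nlinarith
    have := (div_lt_iff₀ hh1).mpr (by linarith : 2 * η * A < 2 * (h + 1))
    linarith
  · have : 0 < 2 * η * A / (h + 1) := by positivity
    linarith
end

section
/- Under the CEO demand model with γ ∈ (0,1), if 0 < η < 1/(1 + ρ(γ^ε − 1)), then for every h > 0 all roots of P(z) = (h+1)(z−1) + 2η(1 + ρhγ^ε + h − ρh) lie strictly inside the unit disk. -/
/-- Scaling attack under CEO demand with γ ∈ (0,1): if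
0 < η < 1/(1+ρ(γ^ε-1)) then for every h > 0 all roots of
P(z)=(h+1)(z-1)+2η(1+ρhγ^ε+h-ρh) lie strictly inside the unit disk. -/
theorem stmt8 (ρ ε γ η : ℝ) (hρ1 : 0 < ρ) (hρ2 : ρ ≤ 1)
    (hε1 : -1 < ε) (hε2 : ε < 0) (hγ1 : 0 < γ) (hγ2 : γ < 1)
    (hη1 : 0 < η) (hη2 : η < 1 / (1 + ρ * (γ ^ ε - 1))) :
    ∀ h : ℝ, 0 < h →
      ∀ z : ℂ, ((h + 1 : ℝ) : ℂ) * (z - 1) +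
        ((2 * η * (1 + ρ * h * γ ^ ε + h - ρ * h) : ℝ) : ℂ) = 0 →
        ‖z‖ < 1 := by
  have hg : 1 < γ ^ ε := by
    rw [show (1:ℝ) = γ ^ (0:ℝ) by simp]
    exact Real.rpow_lt_rpow_of_exponent_gt hγ1 hγ2 hε2
  intro h hh z hz
  set A : ℝ := 1 + ρ * h * γ ^ ε + h - ρ * h with hA
  have hApos : 0 < A := by rw [hA]; nlinarith [mul_pos (mul_pos hρ1 hh) (sub_pos.mpr hg)]
  have hden : (0:ℝ) < 1 + ρ * (γ ^ ε - 1) := by nlinarith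
  have hη3 : η * (1 + ρ * (γ ^ ε - 1)) < 1 := by
    rw [lt_div_iff₀ hden] at hη2; linarith
  have hne : ((h + 1 : ℝ) : ℂ) ≠ 0 := by
    exact_mod_cast ne_of_gt (by linarith : (0:ℝ) < h + 1)
  have hz' : z = ((1 - 2 * η * A / (h + 1) : ℝ) : ℂ) := by
    have hne' : (h : ℂ) + 1 ≠ 0 := by push_cast at hne; simpa using hne
    apply mul_left_cancel₀ hne'
    push_cast [hA] at hz ⊢
    field_simp [hne']
    ring_nf; ring_nf at hz; linear_combination hz
  rw [hz', Complex.norm_real, Real.norm_eq_abs, abs_lt]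
  have hpos : 0 < 2 * η * A / (h + 1) := by positivity
  have hlt : 2 * η * A / (h + 1) < 2 := by
    rw [div_lt_iff₀ (by linarith)]; nlinarith
  constructor <;> linarith
end

section
/- Let P(z) = (h+1)z^{τ+1} + (2η + 2η(1−ρ)h − h − 1)z^τ + 2ηρh, with h > 0, η ∈ (0,1), ρ ∈ (0, 1/2], and τ a positive integer. Then every complex root of P lies strictly inside the open unit disk. -/
/-- Delay-attack characteristic polynomial
P(z)=(h+1)z^(τ+1)+(2η+2η(1-ρ)h-h-1)z^τ+2ηρh with ρ ∈ (0,1/2]: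
every complex root lies strictly inside the open unit disk. -/
theorem stmt9 (h η ρ : ℝ) (τ : ℕ) (hτ : 1 ≤ τ) (hh : 0 < h)
    (hη1 : 0 < η) (hη2 : η < 1) (hρ1 : 0 < ρ) (hρ2 : ρ ≤ 1 / 2) :
    ∀ z : ℂ, ((h + 1 : ℝ) : ℂ) * z ^ (τ + 1) +
      ((2 * η + 2 * η * (1 - ρ) * h - h - 1 : ℝ) : ℂ) * z ^ τ +
      ((2 * η * ρ * h : ℝ) : ℂ) = 0 →
      ‖z‖ < 1 := by
  intro z hz
  by_contra hcon
  push_neg at hcon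
  set a : ℝ := 2 * η + 2 * η * (1 - ρ) * h - h - 1 with ha
  set b : ℝ := 2 * η * ρ * h with hb
  have hb0 : 0 < b := by positivity
  have hfac : z ^ τ * (((h + 1 : ℝ) : ℂ) * z + (a : ℂ)) = -(b : ℂ) := by
    have : ((h + 1 : ℝ) : ℂ) * z ^ (τ + 1) + (a : ℂ) * z ^ τ + (b : ℂ) = 0 := hz
    linear_combination this
  have habs : ‖z‖ ^ τ * ‖((h + 1 : ℝ) : ℂ) * z + (a : ℂ)‖ = b := by
    have := congrArg (‖·‖) hfac
    simpa [norm_mul, norm_pow, norm_neg, Complex.norm_real, Real.norm_eq_abs, abs_of_pos hb0] using this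
  -- key real inequality: |a| < (h+1) - b
  have hkey : |a| < (h + 1) - b := by
    rw [abs_lt]
    constructor <;> nlinarith [mul_pos hη1 hh, mul_pos (mul_pos hη1 hρ1) hh]
  have h1 : (h + 1) - |a| ≤ ‖((h + 1 : ℝ) : ℂ) * z + (a : ℂ)‖ := by
    have htri := norm_add_le (((h + 1 : ℝ) : ℂ) * z + (a : ℂ)) (-(a : ℂ))
    have h2 : ‖((h + 1 : ℝ) : ℂ) * z‖ = (h + 1) * ‖z‖ := by
      rw [norm_mul, Complex.norm_real, Real.norm_eq_abs, abs_of_pos (by linarith)]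
    have h3 : (h + 1) * 1 ≤ (h + 1) * ‖z‖ :=
      mul_le_mul_of_nonneg_left hcon (by linarith)
    simp only [add_neg_cancel_right] at htri
    calc (h + 1) - |a| ≤ (h + 1) * ‖z‖ - |a| := by linarith
      _ ≤ ‖((h + 1 : ℝ) : ℂ) * z + (a : ℂ)‖ := by
          have : ‖-(a : ℂ)‖ = |a| := by
            simp [Complex.norm_real]
          rw [← h2]; linarith [htri, this ▸ htri]
  have hpow : 1 ≤ ‖z‖ ^ τ := one_le_pow₀ hcon
  have hw : 0 < ‖((h + 1 : ℝ) : ℂ) * z + (a : ℂ)‖ := by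
    linarith [abs_nonneg a]
  have : b < b := by
    calc b < (h + 1) - |a| := by linarith
      _ ≤ ‖((h + 1 : ℝ) : ℂ) * z + (a : ℂ)‖ := h1
      _ ≤ ‖z‖ ^ τ * ‖((h + 1 : ℝ) : ℂ) * z + (a : ℂ)‖ :=
          le_mul_of_one_le_left (le_of_lt hw) hpow
      _ = b := habs
  exact lt_irrefl b this
end

section
/- Let u₁ = h+1, u₂ = 2η + 2η(1−ρ)h − h − 1, u₃ = 2ηρh with h > 0, η ∈ (0,1), ρ ∈ (0, 1/2]. Then (u₁ − |u₂|)² − u₃² > 0; equivalently, for any θ, g(1) := u₁² + 2u₁u₂cos θ + u₂² − u₃² > 0. -/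
/-- Key inequality for delay-attack stability: with u₁ = h+1,
u₂ = 2η+2η(1-ρ)h-h-1, u₃ = 2ηρh and ρ ∈ (0,1/2], we have
(u₁-|u₂|)² - u₃² > 0 and, for any θ, u₁² + 2u₁u₂cos θ + u₂² - u₃² > 0. -/
theorem stmt11 (h η ρ : ℝ) (hh : 0 < h) (hη1 : 0 < η) (hη2 : η < 1)
    (hρ1 : 0 < ρ) (hρ2 : ρ ≤ 1 / 2) :
    (0 < ((h + 1) - |2 * η + 2 * η * (1 - ρ) * h - h - 1|) ^ 2 - (2 * η * ρ * h) ^ 2) ∧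
    ∀ θ : ℝ,
      0 < (h + 1) ^ 2 + 2 * (h + 1) * (2 * η + 2 * η * (1 - ρ) * h - h - 1) * Real.cos θ
        + (2 * η + 2 * η * (1 - ρ) * h - h - 1) ^ 2 - (2 * η * ρ * h) ^ 2 := by
  have habs : |2 * η + 2 * η * (1 - ρ) * h - h - 1| < h + 1 - 2 * η * ρ * h := by
    rw [abs_lt]
    constructor <;> nlinarith [mul_pos hη1 hh, mul_pos (mul_pos hη1 hρ1) hh]
  have hu3 : 0 < 2 * η * ρ * h := by positivity
  have habs2 := abs_nonneg (2 * η + 2 * η * (1 - ρ) * h - h - 1)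
  constructor
  · nlinarith
  · intro θ
    have hc1 := Real.neg_one_le_cos θ
    have hc2 := Real.cos_le_one θ
    have hsq := sq_abs (2 * η + 2 * η * (1 - ρ) * h - h - 1)
    have hkey : 2 * (h + 1) * (2 * η + 2 * η * (1 - ρ) * h - h - 1) * Real.cos θ ≥
        -(2 * (h + 1) * |2 * η + 2 * η * (1 - ρ) * h - h - 1|) := by
      have := neg_abs_le ((2 * η + 2 * η * (1 - ρ) * h - h - 1) * Real.cos θ)
      have h2 : |(2 * η + 2 * η * (1 - ρ) * h - h - 1) * Real.cos θ| ≤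
          |2 * η + 2 * η * (1 - ρ) * h - h - 1| := by
        rw [abs_mul]
        calc _ ≤ |2 * η + 2 * η * (1 - ρ) * h - h - 1| * 1 :=
              mul_le_mul_of_nonneg_left (Real.abs_cos_le_one θ) habs2
          _ = _ := mul_one _
      nlinarith [hh.le]
    nlinarith
end

section
/- Let u₁ > 0, u₂ ∈ ℝ with u₁ − |u₂| > 0, and τ ∈ ℤ⁺. Define m(A) = u₁²(2τ+2)A + 2u₁u₂(2τ+1)cos θ + 2τu₂²/A for A > 0. Then m is convex on (0,∞), attains its minimum at A* = |u₂/u₁|·√(τ/(τ+1)) < 1, and m(1) ≥ 2(u₁ − |u₂|)(τ(u₁ − |u₂|) + u₁) > 0. Consequently m(A) > 0 for all A ≥ 1. -/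
set_option maxHeartbeats 1000000


/-- Auxiliary function m(A)=u₁²(2τ+2)A + 2u₁u₂(2τ+1)cos θ + 2τu₂²/A with
u₁ > |u₂|: m is convex on (0,∞), attains its minimum at
A* = |u₂/u₁|·√(τ/(τ+1)) < 1, m(1) ≥ 2(u₁-|u₂|)(τ(u₁-|u₂|)+u₁) > 0, and
m(A) > 0 for all A ≥ 1. -/
theorem stmt13 (u₁ u₂ θ : ℝ) (τ : ℕ) (hτ : 1 ≤ τ)
    (hu₁ : 0 < u₁) (hgap : 0 < u₁ - |u₂|) :
    let m : ℝ → ℝ := fun A =>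
      u₁ ^ 2 * (2 * (τ : ℝ) + 2) * A + 2 * u₁ * u₂ * (2 * (τ : ℝ) + 1) * Real.cos θ
        + 2 * (τ : ℝ) * u₂ ^ 2 / A
    ConvexOn ℝ (Set.Ioi 0) m ∧
    IsMinOn m (Set.Ioi 0) (|u₂ / u₁| * Real.sqrt ((τ : ℝ) / ((τ : ℝ) + 1))) ∧
    |u₂ / u₁| * Real.sqrt ((τ : ℝ) / ((τ : ℝ) + 1)) < 1 ∧
    2 * (u₁ - |u₂|) * ((τ : ℝ) * (u₁ - |u₂|) + u₁) ≤ m 1 ∧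
    0 < m 1 ∧
    ∀ A : ℝ, 1 ≤ A → 0 < m A := by
  intro m
  have hτ1 : (1 : ℝ) ≤ (τ : ℝ) := by exact_mod_cast hτ
  have habs : |u₂| < u₁ := by linarith
  have habs0 : 0 ≤ |u₂| := abs_nonneg u₂
  have hsq : |u₂| ^ 2 = u₂ ^ 2 := sq_abs u₂
  have hcos1 : Real.cos θ ≤ 1 := Real.cos_le_one θ
  have hcos2 : -1 ≤ Real.cos θ := Real.neg_one_le_cos θ
  have hcoskey : -(2 * u₁ * |u₂|) ≤ 2 * u₁ * u₂ * Real.cos θ := by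
    rcases le_or_gt 0 u₂ with h | h
    · rw [abs_of_nonneg h]
      nlinarith [mul_nonneg (mul_nonneg (by linarith : (0:ℝ) ≤ 2 * u₁) h)
        (by linarith : (0:ℝ) ≤ Real.cos θ + 1)]
    · rw [abs_of_neg h]
      nlinarith [mul_nonneg (mul_nonneg (by linarith : (0:ℝ) ≤ 2 * u₁) (by linarith : 0 ≤ -u₂))
        (by linarith : (0:ℝ) ≤ 1 - Real.cos θ)]
  set Astar : ℝ := |u₂ / u₁| * Real.sqrt ((τ : ℝ) / ((τ : ℝ) + 1)) with hAstar
  have hsqrt_lt : Real.sqrt ((τ : ℝ) / ((τ : ℝ) + 1)) ≤ 1 := by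
    rw [Real.sqrt_le_one, div_le_one (by linarith)]; linarith
  have hsqrt_nonneg : 0 ≤ Real.sqrt ((τ : ℝ) / ((τ : ℝ) + 1)) := Real.sqrt_nonneg _
  have habsdiv : |u₂ / u₁| = |u₂| / u₁ := by
    rw [abs_div, abs_of_pos hu₁]
  have hAstar_lt : Astar < 1 := by
    rw [hAstar, habsdiv]
    have h1 : |u₂| / u₁ < 1 := (div_lt_one hu₁).mpr habs
    calc |u₂| / u₁ * Real.sqrt ((τ : ℝ) / ((τ : ℝ) + 1)) ≤ |u₂| / u₁ * 1 := by
          apply mul_le_mul_of_nonneg_left hsqrt_lt (by positivity)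
      _ = |u₂| / u₁ := by ring
      _ < 1 := h1
  have hconv : ConvexOn ℝ (Set.Ioi 0) m := by
    have hinv : ConvexOn ℝ (Set.Ioi 0) (fun x : ℝ => x ^ (-1 : ℤ)) :=
      (strictConvexOn_zpow (by decide) (by decide)).convexOn
    have hb : (0 : ℝ) ≤ 2 * (τ : ℝ) * u₂ ^ 2 := by positivity
    have hsm := hinv.smul hb
    have haff : ConvexOn ℝ (Set.Ioi 0)
        (fun A : ℝ => u₁ ^ 2 * (2 * (τ : ℝ) + 2) * A
          + 2 * u₁ * u₂ * (2 * (τ : ℝ) + 1) * Real.cos θ) := by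
      apply ConvexOn.add_const
      exact (convexOn_id (convex_Ioi 0)).smul (by positivity)
    have := haff.add hsm
    convert this using 1
    case e'_10 => rfl
    funext A
    simp only [m, Pi.add_apply, Pi.smul_def, smul_eq_mul, zpow_neg_one]
    ring
  refine ⟨hconv, ?_, hAstar_lt, ?_, ?_, ?_⟩
  · intro A hA
    simp only [Set.mem_Ioi] at hA
    simp only [Set.mem_setOf_eq, m]
    rcases eq_or_ne u₂ 0 with h0 | h0
    · have hA0 : Astar = 0 := by simp [hAstar, h0]
      rw [hA0, h0]
      norm_num
      positivity
    · have hu2 : 0 < |u₂| := abs_pos.mpr h0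
      have hs_pos : 0 < Real.sqrt ((τ : ℝ) / ((τ : ℝ) + 1)) := by
        apply Real.sqrt_pos.mpr; positivity
      have hApos : 0 < Astar := by
        rw [hAstar, habsdiv]; positivity
      have hkey : u₁ ^ 2 * (2 * (τ : ℝ) + 2) * Astar ^ 2 = 2 * (τ : ℝ) * u₂ ^ 2 := by
        have hsq2 : Real.sqrt ((τ : ℝ) / ((τ : ℝ) + 1)) ^ 2 = (τ : ℝ) / ((τ : ℝ) + 1) :=
          Real.sq_sqrt (by positivity)
        rw [hAstar, habsdiv, mul_pow, hsq2, div_pow, hsq]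
        field_simp
      have expand : (u₁ ^ 2 * (2 * (τ : ℝ) + 2) * A + 2 * (τ : ℝ) * u₂ ^ 2 / A)
          - (u₁ ^ 2 * (2 * (τ : ℝ) + 2) * Astar + 2 * (τ : ℝ) * u₂ ^ 2 / Astar)
          = u₁ ^ 2 * (2 * (τ : ℝ) + 2) * (A - Astar) ^ 2 / A := by
        rw [← hkey]
        field_simp
        ring
      have hnn : 0 ≤ u₁ ^ 2 * (2 * (τ : ℝ) + 2) * (A - Astar) ^ 2 / A :=
        div_nonneg (mul_nonneg (by positivity) (sq_nonneg _)) hA.le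
      linarith [expand, hnn]
  · simp only [m, div_one]
    nlinarith [hgap, hτ1, sq_nonneg (u₁ - |u₂|)]
  · simp only [m, div_one]
    nlinarith [hgap, hτ1, sq_nonneg (u₁ - |u₂|)]
  · intro A hA
    have hA0 : 0 < A := by linarith
    simp only [m]
    have hcoskey2 : -(2 * u₁ * |u₂|) * ((2 * (τ : ℝ) + 1) * A)
        ≤ 2 * u₁ * u₂ * Real.cos θ * ((2 * (τ : ℝ) + 1) * A) :=
      mul_le_mul_of_nonneg_right hcoskey (by positivity)
    have hgoal : 0 < (u₁ ^ 2 * (2 * (τ : ℝ) + 2) * A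
        + 2 * u₁ * u₂ * (2 * (τ : ℝ) + 1) * Real.cos θ
        + 2 * (τ : ℝ) * u₂ ^ 2 / A) * A := by
      have expand : (u₁ ^ 2 * (2 * (τ : ℝ) + 2) * A
          + 2 * u₁ * u₂ * (2 * (τ : ℝ) + 1) * Real.cos θ
          + 2 * (τ : ℝ) * u₂ ^ 2 / A) * A
          = u₁ ^ 2 * (2 * (τ : ℝ) + 2) * A ^ 2
          + 2 * u₁ * u₂ * Real.cos θ * ((2 * (τ : ℝ) + 1) * A)
          + 2 * (τ : ℝ) * u₂ ^ 2 := by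
        field_simp
      rw [expand]
      have hderiv : 0 ≤ (A - 1) * (2 * u₁ * ((2 * (τ : ℝ) + 2) * u₁ - (2 * (τ : ℝ) + 1) * |u₂|)) := by
        apply mul_nonneg (by linarith)
        nlinarith [mul_pos hu₁ hgap, mul_nonneg (by linarith : (0:ℝ) ≤ (τ:ℝ)) (mul_pos hu₁ hgap).le]
      have hsq2 : 0 ≤ u₁ ^ 2 * (2 * (τ : ℝ) + 2) * (A - 1) ^ 2 := by positivity
      have hf1 : 0 < u₁ ^ 2 * (2 * (τ : ℝ) + 2) - 2 * u₁ * |u₂| * (2 * (τ : ℝ) + 1)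
          + 2 * (τ : ℝ) * u₂ ^ 2 := by
        nlinarith [mul_nonneg (by linarith : (0:ℝ) ≤ (τ:ℝ)) (sq_nonneg (u₁ - |u₂|)),
          mul_pos hu₁ hgap, hsq]
      nlinarith [hcoskey2, hderiv, hsq2, hf1]
    by_contra hc
    push_neg at hc
    nlinarith [hgoal, mul_nonneg (neg_nonneg.mpr hc) hA0.le]
end

section
/- Consider the one-step-delay attack characteristic polynomial P(z) = (h+1)z² + (2η + 2η(1−ρ)h − h − 1)z + 2ηρh with h > 0, ρ ∈ (1/2, 1], η ∈ (0,1). If 0 < η < 1/(2ρ), then for every h > 0 both roots of P lie strictly inside the unit disk. -/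
lemma quad_root_in_disk (a b c : ℝ) (ha : 0 < a) (hc : 0 < c) (hca : c < a)
    (hP1 : 0 < a + b + c) (hPm1 : 0 < a - b + c)
    (z : ℂ) (hz : (a:ℂ) * z ^ 2 + (b:ℂ) * z + (c:ℂ) = 0) :
    ‖z‖ < 1 := by
  set x := z.re with hx
  set y := z.im with hy
  have hre : a * (x * x - y * y) + b * x + c = 0 := by
    have := congrArg Complex.re hz
    simpa [pow_two, Complex.add_re, Complex.mul_re, Complex.mul_im,
      Complex.ofReal_re, Complex.ofReal_im] using this
  have him : y * (2 * a * x + b) = 0 := by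
    have := congrArg Complex.im hz
    simp [pow_two, Complex.add_im, Complex.mul_re, Complex.mul_im,
      Complex.ofReal_re, Complex.ofReal_im] at this
    ring_nf
    ring_nf at this
    linarith
  have key : x * x + y * y < 1 := by
    rcases mul_eq_zero.mp him with hy0 | hb
    · -- y = 0, real root
      rw [hy0] at hre ⊢
      have hre' : a * (x * x) + b * x + c = 0 := by ring_nf; ring_nf at hre; linarith
      by_contra hcon
      push_neg at hcon
      rcases le_or_gt 1 x with hx1 | hx1
      · have h1 : 0 < x * (a + b + c) := mul_pos (by linarith) hP1
        have h2 : x * (a + b + c) = (x - 1) * (c - a * x) := by nlinarith [hre']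
        have h3 : (x - 1) * (c - a * x) ≤ 0 :=
          mul_nonpos_of_nonneg_of_nonpos (by linarith) (by nlinarith)
        linarith
      · rcases le_or_gt x (-1) with hx2 | hx2
        · have h1 : x * (a - b + c) < 0 :=
            mul_neg_of_neg_of_pos (by linarith) hPm1
          have h2 : x * (a - b + c) = (x + 1) * (a * x + c) := by nlinarith [hre']
          have hax : a * x + c ≤ 0 := by nlinarith
          have h3 : 0 ≤ (x + 1) * (a * x + c) := by
            nlinarith [mul_nonneg (by linarith : (0:ℝ) ≤ -(x + 1)) (by linarith : (0:ℝ) ≤ -(a * x + c))]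
          linarith
        · nlinarith
    · -- complex pair: b = -2ax, so c = a(x²+y²)
      have hb' : b = -(2 * a * x) := by linarith
      have : a * (x * x + y * y) = c := by rw [hb'] at hre; nlinarith
      nlinarith
  have h2 : ‖z‖ ^ 2 < 1 := by
    rw [Complex.sq_norm, Complex.normSq_apply]; exact key
  nlinarith [norm_nonneg z]

/-- One-step-delay attack (τ=1): if ρ ∈ (1/2,1] and 0 < η < 1/(2ρ), then for
every h > 0 both roots of
P(z)=(h+1)z²+(2η+2η(1-ρ)h-h-1)z+2ηρh lie strictly inside the unit disk. -/
theorem stmt15 (ρ η : ℝ) (hρ1 : 1 / 2 < ρ) (hρ2 : ρ ≤ 1)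
    (hη1 : 0 < η) (hη2 : η < 1) (hη3 : η < 1 / (2 * ρ)) :
    ∀ h : ℝ, 0 < h →
      ∀ z : ℂ, ((h + 1 : ℝ) : ℂ) * z ^ 2 +
        ((2 * η + 2 * η * (1 - ρ) * h - h - 1 : ℝ) : ℂ) * z +
        ((2 * η * ρ * h : ℝ) : ℂ) = 0 →
        ‖z‖ < 1 := by
  intro h hh z hz
  have hρ0 : 0 < ρ := by linarith
  have h2ρ : 0 < 2 * ρ := by linarith
  have hη3' : η * (2 * ρ) < 1 := by
    have := (lt_div_iff₀ h2ρ).mp hη3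
    linarith
  refine quad_root_in_disk (h + 1) (2 * η + 2 * η * (1 - ρ) * h - h - 1)
    (2 * η * ρ * h) (by linarith) (by positivity) ?_ ?_ ?_ z hz
  · nlinarith [mul_pos hη1 h2ρ]
  · nlinarith
  · nlinarith [mul_pos (mul_pos hη1 hρ0) hh, mul_pos hη1 hh]
end

section
/- Let λ_o > 0, s'(λ_o) > 0, w'(λ_o) < 0, and η ∈ (0,1). Suppose the estimated derivative w̃ satisfies w̃ < 0 and the relative error E_w = (w'(λ_o) − w̃)/w'(λ_o) satisfies E_w < (1 − η)(1 − s'(λ_o)/w'(λ_o)). Then 0 < 2η/(s'(λ_o) − w̃) < 2/(s'(λ_o) − w'(λ_o)); in particular, since 1 − s'(λ_o)/w'(λ_o) > 1, the condition E_w < 1 − η suffices. -/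
/-- Robustness to estimation error: if the estimate w̃ < 0 of w'(λ_o) has
relative error E_w = (w'(λ_o) - w̃)/w'(λ_o) < (1-η)(1 - s'(λ_o)/w'(λ_o)), then
0 < 2η/(s'(λ_o) - w̃) < 2/(s'(λ_o) - w'(λ_o)); since 1 - s'(λ_o)/w'(λ_o) > 1,
the condition E_w < 1 - η suffices. -/
theorem stmt16 (lo sd wd wt η : ℝ) (hlo : 0 < lo) (hsd : 0 < sd) (hwd : wd < 0)
    (hη1 : 0 < η) (hη2 : η < 1) (hwt : wt < 0)
    (hEw : (wd - wt) / wd < (1 - η) * (1 - sd / wd)) :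
    (0 < 2 * η / (sd - wt) ∧ 2 * η / (sd - wt) < 2 / (sd - wd)) ∧
    1 < 1 - sd / wd ∧
    ((wd - wt) / wd < 1 - η → (wd - wt) / wd < (1 - η) * (1 - sd / wd)) := by
  have hwt0 : 0 < sd - wt := by linarith
  have hwd0 : 0 < sd - wd := by linarith
  have hkey : (1 - η) * (1 - sd / wd) * wd < wd - wt := (div_lt_iff_of_neg hwd).mp hEw
  have hexp : (1 - η) * (1 - sd / wd) * wd = (1 - η) * (wd - sd) := by
    have : wd ≠ 0 := ne_of_lt hwd
    field_simp
  rw [hexp] at hkey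
  have h1 : 1 < 1 - sd / wd := by
    have : sd / wd < 0 := div_neg_of_pos_of_neg hsd hwd
    linarith
  refine ⟨⟨by positivity, ?_⟩, h1, fun h => lt_of_lt_of_le h ?_⟩
  · rw [div_lt_div_iff₀ hwt0 hwd0]; nlinarith
  · nlinarith
end
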